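/- For an arbitrary graph E and cardinal λ, every injective semigroup homomorphism f : G(E) → P_λ is a topological embedding of (G(E), τ_{F_cf}) into (P_λ, τ_{F_cf}): f is continuous and open onto its image. -/

import Mathlib

universe u

/-- A directed graph. -/
structure DiGraph : Type (u + 1) where
  V : Type u
  E : Type u
  s : E → V
  r : E → V

namespace DiGraph

variable (G : DiGraph.{u})

/-- A list of edges forms a valid path starting at vertex `v`. -/
def Valid (v : G.V) : List G.E → Prop
  | [] => True
  | e :: l => G.s e = v ∧ Valid (G.r e) l

/-- the endpoint of a list of edges starting at `v`. -/
def dst (v : G.V) : List G.E → G.V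
  | [] => v
  | e :: l => dst (G.r e) l

variable {G}

lemma dst_append (v : G.V) (l₁ l₂ : List G.E) :
    G.dst v (l₁ ++ l₂) = G.dst (G.dst v l₁) l₂ := by
  induction l₁ generalizing v with
  | nil => rfl
  | cons e t ih => simp [dst, ih]

lemma valid_append (v : G.V) (l₁ l₂ : List G.E) :
    G.Valid v (l₁ ++ l₂) ↔ G.Valid v l₁ ∧ G.Valid (G.dst v l₁) l₂ := by
  induction l₁ generalizing v with
  | nil => simp [Valid, dst]
  | cons e t ih => simp [Valid, dst, ih, and_assoc]

variable (G) in
/-- A (finite, directed) path in `G`: a source vertex together with a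
composable list of edges.  Paths of length zero are the vertices. -/
structure GPath : Type u where
  src : G.V
  edges : List G.E
  valid : G.Valid src edges

/-- The range (end vertex) of a path. -/
def GPath.rng (p : G.GPath) : G.V := G.dst p.src p.edges

/-- Concatenation of composable paths. -/
def GPath.comp (p q : G.GPath) (h : p.rng = q.src) : G.GPath :=
  ⟨p.src, p.edges ++ q.edges, by
    rw [valid_append]
    exact ⟨p.valid, by rw [show G.dst p.src p.edges = q.src from h]; exact q.valid⟩⟩

lemma GPath.comp_rng (p q : G.GPath) (h : p.rng = q.src) : (p.comp q h).rng = q.rng := by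
  show G.dst p.src (p.edges ++ q.edges) = _
  rw [dst_append, show G.dst p.src p.edges = q.src from h]; rfl

/-- If `p` is a prefix of the path `q`, the remaining path (so that
`q = p.comp (p.strip q _ _)`). -/
def GPath.strip (p q : G.GPath) (hs : p.src = q.src) (hp : p.edges <+: q.edges) : G.GPath :=
  ⟨p.rng, q.edges.drop p.edges.length, by
    obtain ⟨t, ht⟩ := hp
    have h1 : p.edges ++ q.edges.drop p.edges.length = q.edges := by
      rw [← ht, List.drop_left]
    have h2 : G.Valid p.src (p.edges ++ q.edges.drop p.edges.length) := by
      rw [h1, hs]; exact q.valid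
    exact ((valid_append _ _ _).mp h2).2⟩

lemma GPath.strip_rng (p q : G.GPath) (hs : p.src = q.src) (hp : p.edges <+: q.edges) :
    (p.strip q hs hp).rng = q.rng := by
  show G.dst p.rng (q.edges.drop p.edges.length) = G.dst q.src q.edges
  obtain ⟨t, ht⟩ := hp
  have h1 : p.edges ++ q.edges.drop p.edges.length = q.edges := by
    rw [← ht, List.drop_left]
  conv_rhs => rw [← hs, ← h1]
  rw [dst_append]; rfl

variable (G) in
/-- A nonzero element `a b⁻¹` of the graph inverse semigroup: a pair of
paths with the same range. -/
structure NZ : Type u where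
  a : G.GPath
  b : G.GPath
  h : a.rng = b.rng

/-- The graph inverse semigroup `G(E)` over a directed graph, in normal form:
the elements `a b⁻¹` with `r(a) = r(b)`, together with a zero element. -/
def GIS (G : DiGraph.{u}) : Type u := Option (NZ G)

instance : Zero (GIS G) := ⟨none⟩

open scoped Classical in
/-- The multiplication of the graph inverse semigroup:
`a b⁻¹ · c d⁻¹ = a c₁ d⁻¹` if `c = b c₁`, `a (d b₁)⁻¹` if `b = c b₁`, and `0` otherwise. -/
noncomputable instance : Mul (GIS G) :=
  ⟨fun x y =>
    match x, y with
    | none, _ => none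
    | some _, none => none
    | some ⟨a, b, hab⟩, some ⟨c, d, hcd⟩ =>
      if h : b.src = c.src ∧ b.edges <+: c.edges then
        some ⟨a.comp (b.strip c h.1 h.2) hab, d, by
          exact (GPath.comp_rng _ _ _).trans ((GPath.strip_rng _ _ _ _).trans hcd)⟩
      else if h' : c.src = b.src ∧ c.edges <+: b.edges then
        some ⟨a, d.comp (c.strip b h'.1 h'.2) hcd.symm, by
          exact hab.trans ((GPath.comp_rng _ _ _).trans (GPath.strip_rng _ _ _ _)).symm⟩
      else none⟩

/-- The nonzero element `a b⁻¹` of `G(E)` determined by a pair of paths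
with the same range. -/
def GIS.nz (n : NZ G) : GIS G := some n

/-- The inversion of the graph inverse semigroup: `(u v⁻¹)⁻¹ = v u⁻¹`. -/
def GIS.inv : GIS G → GIS G
  | none => none
  | some ⟨a, b, h⟩ => some ⟨b, a, h.symm⟩

end DiGraph
namespace DiGraph

/-- The graph with one vertex and a loop for each element of `ι`. -/
def bouquet (ι : Type u) : DiGraph.{u} :=
  ⟨PUnit, ι, fun _ => PUnit.unit, fun _ => PUnit.unit⟩

/-- The polycyclic monoid `P_ι` on a set `ι` of generators, realized as the
graph inverse semigroup over the graph with one vertex and `ι` many loops. -/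
def PolyM (ι : Type u) : Type u := GIS (bouquet ι)

noncomputable instance (ι : Type u) : Mul (PolyM ι) :=
  inferInstanceAs (Mul (GIS (bouquet ι)))

instance (ι : Type u) : Zero (PolyM ι) := inferInstanceAs (Zero (GIS (bouquet ι)))

end DiGraph
namespace DiGraph

variable {G : DiGraph.{u}}

/-- membership predicate for the basic neighbourhoods of zero: all of
`a b⁻¹` with `a, b ∈ F`, together with `0`. -/
def inUF (F : Set G.GPath) : GIS G → Prop
  | none => True
  | some n => n.a ∈ F ∧ n.b ∈ F

/-- The basic neighbourhood `U_F(0) = {a b⁻¹ : a, b ∈ F} ∪ {0}` of zero. -/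
def UF (F : Set G.GPath) : Set (GIS G) := {x | inUF F x}

lemma inUF_mono {F₁ F₂ : Set G.GPath} (h : F₁ ⊆ F₂) :
    ∀ x : GIS G, inUF F₁ x → inUF F₂ x := by
  intro x hx
  cases x with
  | none => trivial
  | some n => exact ⟨h hx.1, h hx.2⟩

/-- The topology `τ_𝓕` on `G(E)` determined by a filter `𝓕` on `Path(E)`:
every nonzero element is isolated, and the sets `U_F(0)`, `F ∈ 𝓕`, form a
neighbourhood base at `0`. -/
def tauF (𝓕 : Filter G.GPath) : TopologicalSpace (GIS G) where
  IsOpen U := (0 : GIS G) ∈ U → ∃ F ∈ 𝓕, UF F ⊆ U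
  isOpen_univ := fun _ => ⟨Set.univ, Filter.univ_mem, Set.subset_univ _⟩
  isOpen_inter := fun U V hU hV h0 => by
    obtain ⟨F₁, hF₁, hs₁⟩ := hU h0.1
    obtain ⟨F₂, hF₂, hs₂⟩ := hV h0.2
    exact ⟨F₁ ∩ F₂, Filter.inter_mem hF₁ hF₂, fun x hx =>
      ⟨hs₁ (inUF_mono Set.inter_subset_left x hx),
       hs₂ (inUF_mono Set.inter_subset_right x hx)⟩⟩
  isOpen_sUnion := fun S hS h0 => by
    obtain ⟨U, hU, h0U⟩ := h0
    obtain ⟨F, hF, hs⟩ := hS U hU h0U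
    exact ⟨F, hF, hs.trans (Set.subset_sUnion_of_mem hU)⟩

/-- The prefix partial order on paths: `a ≤ b` iff `b` is a prefix of `a`. -/
def prefLE (a b : G.GPath) : Prop := b.src = a.src ∧ b.edges <+: a.edges

/-- An ideal of `(Path(E), ≤)`: a set `A` with `↓A = A`. -/
def IsIdeal (A : Set G.GPath) : Prop :=
  ∀ a b : G.GPath, prefLE a b → b ∈ A → a ∈ A

/-- A topological filter on `Path(E)`:
(i) for `F ∈ 𝓕` and paths `a, b` with `r(a) = r(b)`, the set
`F \ {bk : k ∈ Path(E), ak ∉ F}` belongs to `𝓕`;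
(ii) `𝓕` contains all cofinite subsets of `Path(E)`;
(iii) `𝓕` has a base consisting of ideals of `(Path(E), ≤)`. -/
def IsTopFilter (𝓕 : Filter G.GPath) : Prop :=
  (∀ F ∈ 𝓕, ∀ a b : G.GPath, a.rng = b.rng →
      F \ {p | ∃ (k : G.GPath) (h1 : b.rng = k.src) (h2 : a.rng = k.src),
        p = b.comp k h1 ∧ a.comp k h2 ∉ F} ∈ 𝓕) ∧
  𝓕 ≤ Filter.cofinite ∧
  (∀ F ∈ 𝓕, ∃ I ∈ 𝓕, I ⊆ F ∧ IsIdeal I)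

variable (G) in
/-- The filter `𝓕_ω` generated by the sets `U_n = {u ∈ Path(E) : |u| > n}`. -/
def Fomega : Filter G.GPath :=
  Filter.generate {S | ∃ n : ℕ, S = {u : G.GPath | n < u.edges.length}}

variable (G) in
/-- `U_n(0) = {u v⁻¹ : min{|u|,|v|} > n} ∪ {0}`. -/
def Un (n : ℕ) : Set (GIS G) := UF {u : G.GPath | n < u.edges.length}

end DiGraph

namespace DiGraph
variable {G : DiGraph.{u}} {ι : Type u}

lemma GPath.ext' {p q : G.GPath} (h1 : p.src = q.src) (h2 : p.edges = q.edges) : p = q := by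
  cases p; cases q; dsimp at h1 h2; subst h1; subst h2; rfl

lemma NZ.ext' {m n : NZ G} (h1 : m.a = n.a) (h2 : m.b = n.b) : m = n := by
  cases m; cases n; dsimp at h1 h2; subst h1; subst h2; rfl

lemma bqsrc (a b : (bouquet ι).GPath) : a.src = b.src :=
  Subsingleton.elim (α := PUnit) a.src b.src

lemma bqrng (a b : (bouquet ι).GPath) : a.rng = b.rng :=
  Subsingleton.elim (α := PUnit) a.rng b.rng

lemma bqext {p q : (bouquet ι).GPath} (h : p.edges = q.edges) : p = q :=
  GPath.ext' (bqsrc p q) h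

lemma nz_inj {m n : NZ G} (h : GIS.nz m = GIS.nz n) : m = n := Option.some.inj h

lemma nz_ne_zero (m : NZ G) : GIS.nz m ≠ 0 := fun h => Option.some_ne_none m h

open scoped Classical in
lemma mul_eq (x y : NZ G) : GIS.nz x * GIS.nz y =
    if h : x.b.src = y.a.src ∧ x.b.edges <+: y.a.edges then
      GIS.nz ⟨x.a.comp (x.b.strip y.a h.1 h.2) x.h, y.b, by
        exact (GPath.comp_rng _ _ _).trans ((GPath.strip_rng _ _ _ _).trans y.h)⟩
    else if h' : y.a.src = x.b.src ∧ y.a.edges <+: x.b.edges then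
      GIS.nz ⟨x.a, y.b.comp (y.a.strip x.b h'.1 h'.2) y.h.symm, by
        exact x.h.trans ((GPath.comp_rng _ _ _).trans (GPath.strip_rng _ _ _ _)).symm⟩
    else 0 := by
  cases x; cases y; rfl

lemma gis_zero_mul (x : GIS G) : 0 * x = 0 := rfl
lemma gis_mul_zero (x : GIS G) : x * 0 = 0 := by cases x <;> rfl

lemma L1 (a b d : G.GPath) (hab : a.rng = b.rng) (hbd : b.rng = d.rng) :
    GIS.nz (G := G) ⟨a, b, hab⟩ * GIS.nz ⟨b, d, hbd⟩ = GIS.nz ⟨a, d, hab.trans hbd⟩ := by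
  rw [mul_eq, dif_pos ⟨rfl, List.prefix_refl _⟩]
  exact congrArg GIS.nz (NZ.ext' (GPath.ext' rfl (by simp [GPath.comp, GPath.strip])) rfl)

end DiGraph
namespace DiGraph
variable {G : DiGraph.{u}} {ι : Type u}

lemma mulB (x y : NZ (bouquet ι)) :
    (x.b.edges <+: y.a.edges ∧ ∃ z : NZ (bouquet ι), GIS.nz x * GIS.nz y = GIS.nz z ∧
      z.a.edges = x.a.edges ++ y.a.edges.drop x.b.edges.length ∧ z.b = y.b) ∨
    (y.a.edges <+: x.b.edges ∧ ∃ z : NZ (bouquet ι), GIS.nz x * GIS.nz y = GIS.nz z ∧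
      z.a = x.a ∧ z.b.edges = y.b.edges ++ x.b.edges.drop y.a.edges.length) ∨
    (¬ x.b.edges <+: y.a.edges ∧ ¬ y.a.edges <+: x.b.edges ∧ GIS.nz x * GIS.nz y = 0) := by
  by_cases h1 : x.b.edges <+: y.a.edges
  · refine Or.inl ⟨h1, ?_⟩
    rw [mul_eq, dif_pos ⟨bqsrc _ _, h1⟩]
    exact ⟨_, rfl, rfl, rfl⟩
  · by_cases h2 : y.a.edges <+: x.b.edges
    · refine Or.inr (Or.inl ⟨h2, ?_⟩)
      rw [mul_eq, dif_neg (fun hc => h1 hc.2), dif_pos ⟨bqsrc _ _, h2⟩]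
      exact ⟨_, rfl, rfl, rfl⟩
    · exact Or.inr (Or.inr ⟨h1, h2, by
        rw [mul_eq, dif_neg (fun hc => h1 hc.2), dif_neg (fun hc => h2 hc.2)]⟩)

lemma append_eq_self {α : Type u} {l s : List α} (h : l = l ++ s) : s = [] := by
  have := congrArg List.length h
  simp only [List.length_append] at this
  exact List.eq_nil_of_length_eq_zero (by omega)

lemma F1 {m : NZ (bouquet ι)} (h : GIS.nz m * GIS.nz m = GIS.nz m) :
    m.a.edges = m.b.edges := by
  rcases mulB m m with ⟨hp, z, hz, ha, hb⟩ | ⟨hp, z, hz, ha, hb⟩ | ⟨_, _, hz⟩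
  · rw [h] at hz; obtain rfl := nz_inj hz
    have hs := append_eq_self ha
    have hle : m.a.edges.length ≤ m.b.edges.length := by
      have := List.drop_eq_nil_iff.mp hs
      omega
    exact (hp.eq_of_length (le_antisymm hp.length_le hle)).symm
  · rw [h] at hz; obtain rfl := nz_inj hz
    have hs := append_eq_self hb
    have hle : m.b.edges.length ≤ m.a.edges.length := by
      have := List.drop_eq_nil_iff.mp hs
      omega
    exact hp.eq_of_length (le_antisymm hp.length_le hle)
  · rw [h] at hz; exact absurd hz (nz_ne_zero m)

lemma F2 (c : (bouquet ι).GPath) (m : NZ (bouquet ι))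
    (h : GIS.nz (G := bouquet ι) ⟨c, c, rfl⟩ * GIS.nz m = GIS.nz m) :
    c.edges <+: m.a.edges := by
  rcases mulB ⟨c, c, rfl⟩ m with ⟨hp, _⟩ | ⟨hp, z, hz, ha, hb⟩ | ⟨_, _, hz⟩
  · exact hp
  · rw [h] at hz; obtain rfl := nz_inj hz
    rw [ha]
  · rw [h] at hz; exact absurd hz (nz_ne_zero m)

lemma F3 (c : (bouquet ι).GPath) (m : NZ (bouquet ι))
    (h : GIS.nz m * GIS.nz (G := bouquet ι) ⟨c, c, rfl⟩ = GIS.nz m) :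
    c.edges <+: m.b.edges := by
  rcases mulB m ⟨c, c, rfl⟩ with ⟨hp, z, hz, ha, hb⟩ | ⟨hp, _⟩ | ⟨_, _, hz⟩
  · rw [h] at hz; obtain rfl := nz_inj hz
    rw [hb]
  · exact hp
  · rw [h] at hz; exact absurd hz (nz_ne_zero m)

lemma pref_antisymm {α : Type u} {l s : List α} (h1 : l <+: s) (h2 : s <+: l) : l = s :=
  h1.eq_of_length (le_antisymm h1.length_le h2.length_le)

lemma F4 (m n : NZ (bouquet ι)) (w w' : (bouquet ι).GPath) (hww' : w.rng = w'.rng)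
    (h : GIS.nz m * GIS.nz n = GIS.nz ⟨w, w', hww'⟩) (hw : w.edges <+: m.a.edges) :
    m.a.edges = w.edges := by
  rcases mulB m n with ⟨hp, z, hz, ha, hb⟩ | ⟨hp, z, hz, ha, hb⟩ | ⟨_, _, hz⟩
  · rw [h] at hz; obtain rfl := nz_inj hz.symm
    exact pref_antisymm (ha ▸ ⟨_, rfl⟩) hw
  · rw [h] at hz; obtain rfl := nz_inj hz.symm
    rw [← ha]
  · rw [h] at hz; exact absurd hz (nz_ne_zero _)

lemma F4' (m n : NZ (bouquet ι)) (w w' : (bouquet ι).GPath) (hww' : w.rng = w'.rng)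
    (h : GIS.nz m * GIS.nz n = GIS.nz ⟨w, w', hww'⟩) (hw : w'.edges <+: n.b.edges) :
    n.b.edges = w'.edges := by
  rcases mulB m n with ⟨hp, z, hz, ha, hb⟩ | ⟨hp, z, hz, ha, hb⟩ | ⟨_, _, hz⟩
  · rw [h] at hz; obtain rfl := nz_inj hz.symm
    rw [← hb]
  · rw [h] at hz; obtain rfl := nz_inj hz.symm
    exact pref_antisymm (hb ▸ ⟨_, rfl⟩) hw
  · rw [h] at hz; exact absurd hz (nz_ne_zero _)

lemma F6 (w : (bouquet ι).GPath) (m : NZ (bouquet ι))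
    (h : GIS.nz (G := bouquet ι) ⟨w, w, rfl⟩ * GIS.nz m = GIS.nz ⟨w, w, rfl⟩) :
    m.a.edges <+: w.edges ∧ m.b.edges <+: w.edges := by
  rcases mulB ⟨w, w, rfl⟩ m with ⟨hp, z, hz, ha, hb⟩ | ⟨hp, z, hz, ha, hb⟩ | ⟨_, _, hz⟩
  · rw [h] at hz; obtain rfl := nz_inj hz.symm
    dsimp only at hp ha hb
    have hs := append_eq_self ha
    have hle : m.a.edges.length ≤ w.edges.length := by
      have := List.drop_eq_nil_iff.mp hs
      omega
    refine ⟨(hp.eq_of_length (le_antisymm hp.length_le hle)).symm ▸ List.prefix_refl _, ?_⟩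
    rw [← hb]
  · rw [h] at hz; obtain rfl := nz_inj hz.symm
    exact ⟨hp, hb ▸ ⟨_, rfl⟩⟩
  · rw [h] at hz; exact absurd hz (nz_ne_zero _)

lemma prefix_finite (w : List ι) : {l : List ι | l <+: w}.Finite :=
  (w.inits.finite_toSet).subset (fun l hl => (List.mem_inits _ _).mpr hl)

end DiGraph
namespace DiGraph
variable {G : DiGraph.{u}} {ι : Type u}

lemma key_exists (f : GIS G →ₙ* PolyM ι) (hf : Function.Injective f) (h0 : f 0 = 0) :
    ∃ cmap : G.GPath → (bouquet ι).GPath, Function.Injective cmap ∧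
      ∀ (a b : G.GPath) (hab : a.rng = b.rng),
        f (GIS.nz ⟨a, b, hab⟩) = GIS.nz ⟨cmap a, cmap b, bqrng _ _⟩ := by
  have hex : ∀ p : G.GPath, ∃ c, f (GIS.nz ⟨p, p, rfl⟩) = GIS.nz ⟨c, c, rfl⟩ := by
    intro p
    rcases hEP : f (GIS.nz ⟨p, p, rfl⟩) with _ | m
    · exact absurd (hf (hEP.trans h0.symm)) (nz_ne_zero _)
    · have hEP' : f (GIS.nz ⟨p, p, rfl⟩) = GIS.nz m := hEP
      have hmul : GIS.nz m * GIS.nz m = GIS.nz m := by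
        have h1 := (map_mul f (GIS.nz ⟨p, p, rfl⟩) (GIS.nz ⟨p, p, rfl⟩)).symm.trans
          ((congrArg f (L1 p p p rfl rfl)).trans hEP')
        rw [hEP'] at h1
        exact h1
      exact ⟨m.a, congrArg GIS.nz (NZ.ext' rfl (bqext (F1 hmul).symm))⟩
  choose cmap hcmap using hex
  have cinj : Function.Injective cmap := by
    intro p q h
    have h2 : f (GIS.nz ⟨p, p, rfl⟩) = f (GIS.nz ⟨q, q, rfl⟩) := by
      rw [hcmap p, hcmap q, h]
    exact congrArg NZ.a (nz_inj (hf h2))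
  refine ⟨cmap, cinj, ?_⟩
  intro a b hab
  rcases hm : f (GIS.nz ⟨a, b, hab⟩) with _ | m
  · exact absurd (hf (hm.trans h0.symm)) (nz_ne_zero _)
  have hm' : f (GIS.nz ⟨a, b, hab⟩) = GIS.nz m := hm
  rcases hn : f (GIS.nz ⟨b, a, hab.symm⟩) with _ | n
  · exact absurd (hf (hn.trans h0.symm)) (nz_ne_zero _)
  have hn' : f (GIS.nz ⟨b, a, hab.symm⟩) = GIS.nz n := hn
  have e1 : GIS.nz (G := bouquet ι) ⟨cmap a, cmap a, rfl⟩ * GIS.nz m = GIS.nz m := by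
    have h1 := (map_mul f (GIS.nz ⟨a, a, rfl⟩) (GIS.nz ⟨a, b, hab⟩)).symm.trans
      ((congrArg f (L1 a a b rfl hab)).trans hm')
    rw [hcmap a, hm'] at h1
    exact h1
  have p1 := F2 _ _ e1
  have e2 : GIS.nz m * GIS.nz (G := bouquet ι) ⟨cmap b, cmap b, rfl⟩ = GIS.nz m := by
    have h1 := (map_mul f (GIS.nz ⟨a, b, hab⟩) (GIS.nz ⟨b, b, rfl⟩)).symm.trans
      ((congrArg f (L1 a b b hab rfl)).trans hm')
    rw [hcmap b, hm'] at h1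
    exact h1
  have p2 := F3 _ _ e2
  have e3 : GIS.nz m * GIS.nz n = GIS.nz ⟨cmap a, cmap a, rfl⟩ := by
    have h1 := (map_mul f (GIS.nz ⟨a, b, hab⟩) (GIS.nz ⟨b, a, hab.symm⟩)).symm.trans
      ((congrArg f (L1 a b a hab hab.symm)).trans (hcmap a))
    rw [hm', hn'] at h1
    exact h1
  have q1 := F4 m n _ _ _ e3 p1
  have e4 : GIS.nz n * GIS.nz m = GIS.nz ⟨cmap b, cmap b, rfl⟩ := by
    have h1 := (map_mul f (GIS.nz ⟨b, a, hab.symm⟩) (GIS.nz ⟨a, b, hab⟩)).symm.trans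
      ((congrArg f (L1 b a b hab.symm hab)).trans (hcmap b))
    rw [hm', hn'] at h1
    exact h1
  have q2 := F4' n m _ _ _ e4 p2
  exact congrArg GIS.nz (NZ.ext' (bqext q1) (bqext q2))

lemma finite_of_ne (f : GIS G →ₙ* PolyM ι) (hf : Function.Injective f) (h0 : f 0 ≠ 0) :
    Finite (GIS G) := by
  rcases hw0 : f 0 with _ | w0
  · exact absurd hw0 h0
  have hw0' : f 0 = GIS.nz w0 := hw0
  have h00 : GIS.nz w0 * GIS.nz w0 = GIS.nz w0 := by
    have h1 := (map_mul f 0 0).symm.trans (congrArg f (gis_zero_mul 0))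
    rw [hw0'] at h1
    exact h1
  have hw := F1 h00
  have hfw : f 0 = GIS.nz ⟨w0.a, w0.a, rfl⟩ := by
    rw [hw0']; exact congrArg GIS.nz (NZ.ext' rfl (bqext hw.symm))
  have hex : ∀ n : NZ G, ∃ m : NZ (bouquet ι), f (GIS.nz n) = GIS.nz m ∧
      m.a.edges <+: w0.a.edges ∧ m.b.edges <+: w0.a.edges := by
    intro n
    have hzm := (map_mul f 0 (GIS.nz n)).symm.trans (congrArg f (gis_zero_mul (GIS.nz n)))
    rcases hm : f (GIS.nz n) with _ | m
    · rw [hfw, hm] at hzm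
      exact absurd (show GIS.nz (G := bouquet ι) ⟨w0.a, w0.a, rfl⟩ = 0 from hzm.symm)
        (nz_ne_zero _)
    · have hm' : f (GIS.nz n) = GIS.nz m := hm
      rw [hfw, hm'] at hzm
      exact ⟨m, rfl, F6 _ _ hzm⟩
  choose g hg hga hgb using hex
  have ginj : Function.Injective g := by
    intro n n' h
    have : f (GIS.nz n) = f (GIS.nz n') := by rw [hg n, hg n', h]
    exact nz_inj (hf this)
  have hS : {m : NZ (bouquet ι) | m.a.edges <+: w0.a.edges ∧ m.b.edges <+: w0.a.edges}.Finite := by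
    have hP := prefix_finite (ι := ι) w0.a.edges
    have hEq : {m : NZ (bouquet ι) | m.a.edges <+: w0.a.edges ∧ m.b.edges <+: w0.a.edges}
        = (fun m : NZ (bouquet ι) => (m.a.edges, m.b.edges)) ⁻¹'
          ({l : List ι | l <+: w0.a.edges} ×ˢ {l : List ι | l <+: w0.a.edges}) := rfl
    rw [hEq]
    refine Set.Finite.preimage ?_ (hP.prod hP)
    intro m _ m' _ hmm
    exact NZ.ext' (bqext (congrArg Prod.fst hmm)) (bqext (congrArg Prod.snd hmm))
  have hNZ : Finite (NZ G) := by
    rw [← Set.finite_univ_iff]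
    refine Set.Finite.of_finite_image ?_ ginj.injOn
    refine hS.subset ?_
    rintro _ ⟨n, -, rfl⟩
    exact ⟨hga n, hgb n⟩
  haveI := hNZ
  exact Set.finite_univ_iff.mp (Set.finite_option.mpr (Set.toFinite _))

end DiGraph
open DiGraph in
/-- For an arbitrary graph `E` and cardinal `λ`, every injective semigroup
homomorphism `f : G(E) → P_λ` is a topological embedding of
`(G(E), τ_{𝓕_cf})` into `(P_λ, τ_{𝓕_cf})`. -/
theorem injective_hom_isEmbedding_cofinite (G : DiGraph.{u}) (ι : Type u)
    (f : GIS G →ₙ* PolyM ι) (hf : Function.Injective f) :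
    @Topology.IsEmbedding _ _ (tauF (Filter.cofinite : Filter G.GPath))
      (tauF (Filter.cofinite : Filter (bouquet ι).GPath)) f := by
  classical
  letI t1 : TopologicalSpace (GIS G) := tauF (Filter.cofinite : Filter G.GPath)
  letI t2 : TopologicalSpace (GIS (bouquet ι)) := tauF (Filter.cofinite : Filter (bouquet ι).GPath)
  refine ⟨⟨?_⟩, hf⟩
  refine TopologicalSpace.ext_iff.mpr fun U => ?_
  show IsOpen U ↔ ∃ t : Set (GIS (bouquet ι)), IsOpen t ∧ f ⁻¹' t = U
  have hpre : ∀ W : Set (GIS G), f ⁻¹' ((f '' W) ∪ (Set.range ⇑f)ᶜ) = W := by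
    intro W
    ext x
    simp only [Set.mem_preimage, Set.mem_union, Set.mem_image, Set.mem_compl_iff, Set.mem_range]
    constructor
    · rintro (⟨x', hx', hfx⟩ | hnr)
      · rwa [← hf hfx]
      · exact absurd ⟨x, rfl⟩ hnr
    · intro hx; exact Or.inl ⟨x, hx, rfl⟩
  by_cases h0 : f 0 = 0
  · obtain ⟨cmap, cinj, key⟩ := key_exists f hf h0
    constructor
    · intro hU
      refine ⟨f '' U ∪ (Set.range ⇑f)ᶜ, ?_, hpre U⟩
      intro h0V
      have hU0 : (0 : GIS G) ∈ U := by
        rcases h0V with ⟨x, hxU, hfx⟩ | hnr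
        · rwa [hf (hfx.trans h0.symm)] at hxU
        · exact absurd ⟨0, h0⟩ hnr
      obtain ⟨F, hF, hFU⟩ := hU hU0
      refine ⟨(cmap '' Fᶜ)ᶜ, ?_, ?_⟩
      · rw [Filter.mem_cofinite, compl_compl]
        exact (Filter.mem_cofinite.mp hF).image cmap
      · rintro z hz
        cases z with
        | none => exact Or.inl ⟨0, hU0, h0⟩
        | some n =>
          by_cases hr : some n ∈ Set.range ⇑f
          · obtain ⟨x, hx⟩ := hr
            rcases x with _ | ⟨a, b, hab⟩
            · exact absurd (hx.symm.trans h0) (fun hh => Option.some_ne_none n hh)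
            · have hn : n = ⟨cmap a, cmap b, bqrng _ _⟩ := nz_inj (hx.symm.trans (key a b hab))
              obtain ⟨hza, hzb⟩ := hz
              have haF : a ∈ F := by
                by_contra hna
                exact hza (by rw [hn]; exact ⟨a, hna, rfl⟩)
              have hbF : b ∈ F := by
                by_contra hnb
                exact hzb (by rw [hn]; exact ⟨b, hnb, rfl⟩)
              exact Or.inl ⟨some ⟨a, b, hab⟩, hFU ⟨haF, hbF⟩, hx⟩
          · exact Or.inr hr
    · rintro ⟨V, hV, rfl⟩
      intro h0mem
      have h0V : (0 : PolyM ι) ∈ V := by rw [← h0]; exact h0mem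
      obtain ⟨F', hF', hF'V⟩ := hV h0V
      refine ⟨cmap ⁻¹' F', ?_, ?_⟩
      · rw [Filter.mem_cofinite, ← Set.preimage_compl]
        exact Set.Finite.preimage cinj.injOn (Filter.mem_cofinite.mp hF')
      · rintro z hz
        cases z with
        | none => exact h0mem
        | some nn =>
          obtain ⟨a, b, hab⟩ := nn
          obtain ⟨ha, hb⟩ := hz
          have hmem : f (GIS.nz ⟨a, b, hab⟩) ∈ UF F' := by
            rw [key a b hab]; exact ⟨ha, hb⟩
          exact hF'V hmem
  · haveI hfin : Finite (GIS G) := finite_of_ne f hf h0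
    haveI hfinN : Finite (NZ G) :=
      Finite.of_injective (fun n : NZ G => (GIS.nz n : GIS G)) (fun a b h => nz_inj h)
    haveI hfinP : Finite G.GPath := Finite.of_injective (fun p => (⟨p, p, rfl⟩ : NZ G))
      (fun p q h => congrArg NZ.a h)
    constructor
    · intro _
      refine ⟨f '' U ∪ (Set.range ⇑f)ᶜ, ?_, hpre U⟩
      intro h0V
      refine ⟨(NZ.a '' (some ⁻¹' Set.range ⇑f))ᶜ, ?_, ?_⟩
      · rw [Filter.mem_cofinite, compl_compl]
        exact (Set.Finite.preimage (Option.some_injective _).injOn (Set.finite_range ⇑f)).image _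
      · rintro z hz
        cases z with
        | none => exact h0V
        | some n =>
          by_cases hr : some n ∈ Set.range ⇑f
          · exact absurd (Set.mem_image_of_mem NZ.a hr) hz.1
          · exact Or.inr hr
    · rintro ⟨V, hV, rfl⟩
      intro h0mem
      refine ⟨∅, ?_, ?_⟩
      · rw [Filter.mem_cofinite, Set.compl_empty]
        exact Set.finite_univ
      · rintro z hz
        cases z with
        | none => exact h0mem
        | some n => exact absurd hz.1 (Set.notMem_empty _)
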